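/- Let (u_n) be a sequence of positive reals converging to u > 0. Then for every ε > 0 there exists N such that for all n > N and all k with 0 < k ≤ n, |(∏_{i=k}^{n} u_i)^{1/(n−k+1)} − u| < ε, i.e., the geometric means of all tail segments ending at n converge to u uniformly in the starting index. -/

import Mathlib

open Filter

/-- If `(u_n)` is a sequence of positive reals converging to `u > 0`, then the
geometric means of all tail segments ending at `n` converge to `u` uniformly in
the starting index. -/
theorem stmt_11 (u : ℕ → ℝ) (hpos : ∀ n, 0 < u n) (l : ℝ) (hl : 0 < l)
    (hconv : Tendsto u atTop (nhds l)) :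
    ∀ ε > 0, ∃ N : ℕ, ∀ n > N, ∀ k : ℕ, 0 < k → k ≤ n →
      |(∏ i ∈ Finset.Icc k n, u i) ^ ((1 : ℝ) / ((n : ℝ) - k + 1)) - l| < ε := by
  intro ε hε
  obtain ⟨δ, hδ, hδε⟩ : ∃ δ > 0, ∀ x : ℝ, |x - Real.log l| < δ → |Real.exp x - l| < ε := by
    have h := Real.continuous_exp.continuousAt (x := Real.log l)
    rw [Metric.continuousAt_iff] at h
    obtain ⟨δ, hδ, h⟩ := h ε hε
    refine ⟨δ, hδ, fun x hx => ?_⟩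
    have := h (by simpa [Real.dist_eq] using hx)
    simpa [Real.dist_eq, Real.exp_log hl] using this
  set v : ℕ → ℝ := fun i => Real.log (u i) - Real.log l with hv
  have hv0 : Tendsto v atTop (nhds 0) := by
    have hlog : Tendsto (fun i => Real.log (u i)) atTop (nhds (Real.log l)) :=
      ((Real.continuousAt_log hl.ne').tendsto).comp hconv
    have := hlog.sub_const (Real.log l)
    simpa using this
  obtain ⟨M, hM⟩ : ∃ M, ∀ i ≥ M, |v i| < δ / 2 := by
    obtain ⟨M, hM'⟩ := (Metric.tendsto_atTop.1 hv0) (δ / 2) (by linarith)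
    exact ⟨M, fun i hi => by simpa [Real.dist_eq] using hM' i hi⟩
  set C : ℝ := ∑ i ∈ Finset.range M, |v i| with hC
  have hC0 : 0 ≤ C := Finset.sum_nonneg fun i _ => abs_nonneg _
  obtain ⟨N, hN⟩ := exists_nat_gt ((M : ℝ) + 2 * C / δ)
  refine ⟨N, fun n hn k hk hkn => ?_⟩
  have hNM : (M : ℝ) < N := lt_of_le_of_lt (by linarith [div_nonneg (by linarith : (0:ℝ) ≤ 2 * C) hδ.le]) hN
  have hMn : M < n := by exact_mod_cast lt_of_lt_of_le (lt_of_lt_of_le hNM (Nat.cast_le.2 hn.le)) le_rfl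
  have hkn' : (k : ℝ) ≤ n := Nat.cast_le.2 hkn
  set c : ℝ := (n : ℝ) - k + 1 with hcdef
  have hc : (0:ℝ) < c := by rw [hcdef]; linarith
  have hcard : ((Finset.Icc k n).card : ℝ) = c := by
    rw [Nat.card_Icc]
    have h1 : n + 1 - k = n - k + 1 := by omega
    rw [h1, Nat.cast_add, Nat.cast_sub hkn, Nat.cast_one]
  have hprod : (∏ i ∈ Finset.Icc k n, u i) ^ ((1 : ℝ) / c)
      = Real.exp ((∑ i ∈ Finset.Icc k n, Real.log (u i)) / c) := by
    rw [Real.rpow_def_of_pos (Finset.prod_pos fun i _ => hpos i),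
      Real.log_prod (fun i _ => (hpos i).ne')]
    ring_nf
  rw [hprod]
  apply hδε
  have hsum : ∑ i ∈ Finset.Icc k n, v i
      = (∑ i ∈ Finset.Icc k n, Real.log (u i)) - c * Real.log l := by
    rw [Finset.sum_sub_distrib, Finset.sum_const, ← hcard]
    ring_nf
  have key : (∑ i ∈ Finset.Icc k n, Real.log (u i)) / c - Real.log l
      = (∑ i ∈ Finset.Icc k n, v i) / c := by
    rw [hsum]; field_simp
  rw [key, abs_div, abs_of_pos hc, div_lt_iff₀ hc]
  -- now bound |∑ v| < δ * c
  rcases le_or_gt M k with hMk | hkM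
  · -- all indices ≥ M
    calc |∑ i ∈ Finset.Icc k n, v i| ≤ ∑ i ∈ Finset.Icc k n, |v i| :=
          Finset.abs_sum_le_sum_abs _ _
      _ ≤ (Finset.Icc k n).card • (δ / 2) := by
          refine Finset.sum_le_card_nsmul _ _ _ fun i hi => ?_
          exact (hM i (le_trans hMk (Finset.mem_Icc.1 hi).1)).le
      _ = c * (δ / 2) := by rw [nsmul_eq_mul, hcard]
      _ < δ * c := by nlinarith
  · -- split at M
    have hsub : Finset.Icc M n ⊆ Finset.Icc k n := by
      intro i hi
      rw [Finset.mem_Icc] at hi ⊢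
      exact ⟨le_trans hkM.le hi.1, hi.2⟩
    have hsplit : ∑ i ∈ Finset.Icc k n, v i
        = (∑ i ∈ Finset.Icc k n \ Finset.Icc M n, v i) + ∑ i ∈ Finset.Icc M n, v i :=
      (Finset.sum_sdiff hsub).symm
    have h1 : |∑ i ∈ Finset.Icc k n \ Finset.Icc M n, v i| ≤ C := by
      calc |∑ i ∈ Finset.Icc k n \ Finset.Icc M n, v i|
          ≤ ∑ i ∈ Finset.Icc k n \ Finset.Icc M n, |v i| := Finset.abs_sum_le_sum_abs _ _
        _ ≤ ∑ i ∈ Finset.range M, |v i| := by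
            refine Finset.sum_le_sum_of_subset_of_nonneg ?_ (fun i _ _ => abs_nonneg _)
            intro i hi
            rw [Finset.mem_sdiff, Finset.mem_Icc, Finset.mem_Icc] at hi
            rw [Finset.mem_range]
            omega
        _ = C := rfl
    have h2 : |∑ i ∈ Finset.Icc M n, v i| ≤ c * (δ / 2) := by
      calc |∑ i ∈ Finset.Icc M n, v i| ≤ ∑ i ∈ Finset.Icc M n, |v i| :=
            Finset.abs_sum_le_sum_abs _ _
        _ ≤ (Finset.Icc M n).card • (δ / 2) := by
            refine Finset.sum_le_card_nsmul _ _ _ fun i hi => ?_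
            exact (hM i (Finset.mem_Icc.1 hi).1).le
        _ ≤ c * (δ / 2) := by
            rw [nsmul_eq_mul]
            have : ((Finset.Icc M n).card : ℝ) ≤ ((Finset.Icc k n).card : ℝ) :=
              Nat.cast_le.2 (Finset.card_le_card hsub)
            rw [hcard] at this
            nlinarith
    have hClt : C < c * (δ / 2) := by
      -- c = n - k + 1 > N - M ≥ 2C/δ
      have hkM' : (k : ℝ) ≤ (M : ℝ) - 1 := by
        have h' : (k : ℝ) + 1 ≤ M := by exact_mod_cast hkM
        linarith
      have hnN : (N : ℝ) < n := by exact_mod_cast hn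
      have hcbig : (2 * C / δ) < c := by
        rw [hcdef]; linarith
      have := (div_lt_iff₀ hδ).1 hcbig
      nlinarith
    calc |∑ i ∈ Finset.Icc k n, v i|
        ≤ |∑ i ∈ Finset.Icc k n \ Finset.Icc M n, v i| + |∑ i ∈ Finset.Icc M n, v i| := by
          rw [hsplit]; exact abs_add_le _ _
      _ ≤ C + c * (δ / 2) := add_le_add h1 h2
      _ < c * (δ / 2) + c * (δ / 2) := by linarith
      _ = δ * c := by ring
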